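/- Let N > M ≥ 1 be coprime integers with N + M even, let a, b ∈ ℂ, and let τ : ℤ → ℂ satisfy τ_m ≠ 0 for all m. Define u_m = (τ_m τ_{m+M+2})/(τ_{m+2} τ_{m+M}). Then τ satisfies the bilinear T-system τ_{m+2M+N} τ_m = a τ_{m+2M} τ_{m+N} + b τ_{m+N+M} τ_{m+M} for all m ∈ ℤ if and only if u satisfies the U-system u_m u_{m+2} ⋯ u_{m+N+M−2} = (b u_{m+M} u_{m+M+2} ⋯ u_{m+N−2} + a)/(u_{m+M} u_{m+M+2} ⋯ u_{m+N−2}) for all m ∈ ℤ, where both products run over indices increasing in steps of 2. -/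

import Mathlib

lemma tele (M : ℕ) (τ u : ℤ → ℂ) (hτ : ∀ m : ℤ, τ m ≠ 0)
    (hu : ∀ m : ℤ, u m = τ m * τ (m + M + 2) / (τ (m + 2) * τ (m + M))) :
    ∀ (k : ℕ) (m : ℤ), ∏ i ∈ Finset.range k, u (m + 2 * i) =
      τ m * τ (m + M + 2 * k) / (τ (m + 2 * k) * τ (m + M)) := by
  intro k
  induction k with
  | zero =>
      intro m
      simp only [Finset.range_zero, Finset.prod_empty, Nat.cast_zero, mul_zero, add_zero]
      rw [div_self (mul_ne_zero (hτ _) (hτ _))]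
  | succ n ih =>
      intro m
      rw [Finset.prod_range_succ, ih, hu]
      push_cast
      have a1 : m + 2 * ((n : ℤ) + 1) = m + 2 * n + 2 := by ring
      have a2 : m + (M : ℤ) + 2 * ((n : ℤ) + 1) = m + 2 * n + M + 2 := by ring
      have a3 : m + (M : ℤ) + 2 * (n : ℤ) = m + 2 * n + M := by ring
      rw [a1, a2, a3]
      field_simp [hτ]

theorem tSystem_iff_uSystem_even_second
    (N M : ℕ) (hM : 1 ≤ M) (hMN : M < N) (hcop : Nat.Coprime N M)
    (heven : Even (N + M)) (a b : ℂ)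
    (τ : ℤ → ℂ) (hτ : ∀ m : ℤ, τ m ≠ 0)
    (u : ℤ → ℂ)
    (hu : ∀ m : ℤ, u m = τ m * τ (m + M + 2) / (τ (m + 2) * τ (m + M))) :
    (∀ m : ℤ, τ (m + 2 * M + N) * τ m =
        a * (τ (m + 2 * M) * τ (m + N)) + b * (τ (m + N + M) * τ (m + M))) ↔
    (∀ m : ℤ, ∏ i ∈ Finset.range ((N + M) / 2), u (m + 2 * i) =
        (b * ∏ i ∈ Finset.range ((N - M) / 2), u (m + M + 2 * i) + a) /
          ∏ i ∈ Finset.range ((N - M) / 2), u (m + M + 2 * i)) := by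
  have hKz : (2 : ℤ) * (((N + M) / 2 : ℕ) : ℤ) = (N : ℤ) + M := by
    obtain ⟨t, ht⟩ := heven; omega
  have hLz : (2 : ℤ) * (((N - M) / 2 : ℕ) : ℤ) = (N : ℤ) - M := by
    obtain ⟨t, ht⟩ := heven; omega
  apply forall_congr'
  intro m
  have t1 := tele M τ u hτ hu ((N + M) / 2) m
  have t2 := tele M τ u hτ hu ((N - M) / 2) (m + M)
  rw [hKz] at t1
  rw [hLz] at t2
  have e1 : m + (M : ℤ) + ((N : ℤ) + M) = m + 2 * M + N := by ring
  have e2 : m + ((N : ℤ) + M) = m + N + M := by ring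
  have e3 : m + (M : ℤ) + M + ((N : ℤ) - M) = m + N + M := by ring
  have e4 : m + (M : ℤ) + ((N : ℤ) - M) = m + N := by ring
  have e5 : m + (M : ℤ) + M = m + 2 * M := by ring
  rw [e1, e2] at t1
  rw [e3, e4, e5] at t2
  rw [t1, t2]
  rw [div_eq_div_iff (mul_ne_zero (hτ _) (hτ _))
    (div_ne_zero (mul_ne_zero (hτ _) (hτ _)) (mul_ne_zero (hτ _) (hτ _)))]
  constructor
  · intro h
    field_simp [hτ]
    linear_combination h
  · intro h
    field_simp [hτ] at h
    have h' : (τ (m + 2 * (M:ℤ) + N) * τ m) * (τ (m + (M:ℤ)) * τ (m + N + M)) =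
        (a * (τ (m + 2 * (M:ℤ)) * τ (m + N)) + b * (τ (m + N + M) * τ (m + M))) *
          (τ (m + (M:ℤ)) * τ (m + N + M)) := by linear_combination (τ (m + (M:ℤ)) * τ (m + N + M)) * h
    exact mul_right_cancel₀ (mul_ne_zero (hτ _) (hτ _)) h'
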